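/- Let p ≥ 1, L ≥ 1 be integers and λ > 0. For each ℓ = 0, …, L−1 let M_ℓ ≥ 1 be an integer, X_ℓ a real M_ℓ×p matrix, φ_ℓ ∈ ℝ^p a vector with at most q_ℓ nonzero entries, E_ℓ ∈ ℝ^{M_ℓ}, Y_ℓ = X_ℓφ_ℓ + E_ℓ, Γ̂_ℓ = X_ℓᵀX_ℓ/M_ℓ, and let φ̂_ℓ ∈ ℝ^p be any minimizer over β ∈ ℝ^p of (1/M_ℓ)‖Y_ℓ − X_ℓβ‖₂² + λ‖β‖₁. Assume for each ℓ < L: (i) the deviation condition ‖X_ℓᵀE_ℓ/M_ℓ‖_∞ ≤ λ/4, and (ii) Γ̂_ℓ satisfies the restricted eigenvalue condition RE(α_ℓ, τ_ℓ) with q_ℓ·τ_ℓ ≤ α_ℓ/32. Let (φ_ℓ)_{ℓ≥0} ⊂ ℝ^p satisfy ∑_{ℓ≥0} ‖φ_ℓ‖₂(2ℓ+1) < ∞, let k(z) = ∑_{ℓ=0}^∞ φ_ℓ·((2ℓ+1)/(4π))·P_ℓ(z) (the series converging absolutely and uniformly on [−1,1]), k_L = ∑_{ℓ=0}^{L−1}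 φ_ℓ·((2ℓ+1)/(4π))·P_ℓ, and k̂ = ∑_{ℓ=0}^{L−1} φ̂_ℓ·((2ℓ+1)/(4π))·P_ℓ. Then ‖k̂ − k‖_{L∞} ≤ (3/π)·λ·∑_{ℓ=0}^{L−1} (√(q_ℓ)/α_ℓ)(2ℓ+1) + ‖k − k_L‖_{L∞}. -/

import Mathlib

open Matrix Real Finset Filter

/-- The ℓ¹ norm on `Fin p → ℝ`. -/
noncomputable def l1 {p : ℕ} (v : Fin p → ℝ) : ℝ := ∑ i, |v i|

/-- The ℓ² (Euclidean) norm on `Fin n → ℝ`. -/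
noncomputable def l2 {n : ℕ} (v : Fin n → ℝ) : ℝ := Real.sqrt (∑ i, (v i) ^ 2)

/-- The ℓ∞ norm on `Fin p → ℝ`. -/
noncomputable def linf {p : ℕ} (v : Fin p → ℝ) : ℝ := ⨆ i, |v i|

/-- The restricted eigenvalue condition `RE(α, τ)`:
`θᵀAθ ≥ α‖θ‖₂² − τ‖θ‖₁²` for every `θ ∈ ℝ^p`. -/
def RECond {p : ℕ} (A : Matrix (Fin p) (Fin p) ℝ) (α τ : ℝ) : Prop :=
  ∀ θ : Fin p → ℝ, α * (l2 θ) ^ 2 - τ * (l1 θ) ^ 2 ≤ θ ⬝ᵥ (A *ᵥ θ)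

/-- The Legendre polynomial of degree `ℓ`, defined via Rodrigues' formula
`P_ℓ(u) = (1/(2^ℓ ℓ!)) (d/du)^ℓ (u² − 1)^ℓ`. -/
noncomputable def legendreP (ℓ : ℕ) (u : ℝ) : ℝ :=
  (1 / ((2 : ℝ) ^ ℓ * (Nat.factorial ℓ : ℝ))) *
    iteratedDeriv ℓ (fun x : ℝ => (x ^ 2 - 1) ^ ℓ) u

/-- The `ℓ`-th term `c_ℓ ((2ℓ+1)/(4π)) P_ℓ(z)` of a vector-valued Legendre series. -/
noncomputable def legendreTerm {p : ℕ} (c : ℕ → Fin p → ℝ) (ℓ : ℕ) (z : ℝ) : Fin p → ℝ :=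
  ((2 * (ℓ : ℝ) + 1) / (4 * π) * legendreP ℓ z) • c ℓ

/-- Partial sum `∑_{ℓ<n} c_ℓ ((2ℓ+1)/(4π)) P_ℓ(z)` of a vector-valued Legendre series. -/
noncomputable def legendreSum {p : ℕ} (c : ℕ → Fin p → ℝ) (n : ℕ) (z : ℝ) : Fin p → ℝ :=
  ∑ ℓ ∈ Finset.range n, legendreTerm c ℓ z

set_option maxHeartbeats 1600000

section Legendre
open Polynomial

lemma iteratedDeriv_polyval (n : ℕ) (pp : ℝ[X]) :
    iteratedDeriv n (fun x : ℝ => pp.eval x) = fun x => (derivative^[n] pp).eval x := by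
  induction n generalizing pp with
  | zero => simp [iteratedDeriv_zero]
  | succ n ih =>
    rw [iteratedDeriv_succ', Function.iterate_succ_apply]
    have : (deriv fun x : ℝ => pp.eval x) = fun x : ℝ => (derivative pp).eval x :=
      funext fun x => Polynomial.deriv pp
    rw [this, ih]

lemma iterate_derivative_add' (n : ℕ) (f g : ℝ[X]) :
    derivative^[n] (f + g) = derivative^[n] f + derivative^[n] g := by
  induction n generalizing f g with
  | zero => rfl
  | succ n ih => rw [Function.iterate_succ_apply, derivative_add, ih,
      Function.iterate_succ_apply, Function.iterate_succ_apply]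

lemma iterate_derivative_X_mul (n : ℕ) (f : ℝ[X]) :
    derivative^[n+1] (X * f) = X * derivative^[n+1] f + ((n:ℝ[X]) + 1) * derivative^[n] f := by
  induction n generalizing f with
  | zero => simp [derivative_mul]; ring
  | succ n ih =>
    rw [show n+1+1 = (n+1)+1 from rfl, Function.iterate_succ_apply]
    have h1 : derivative (X * f) = f + X * derivative f := by
      rw [derivative_mul, derivative_X, one_mul]
    rw [h1, iterate_derivative_add' (n+1), ih (derivative f)]
    simp only [← Function.iterate_succ_apply (f := ⇑derivative), Nat.succ_eq_add_one]
    push_cast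
    ring

lemma iterate_derivative_sq_sub_one_mul (n : ℕ) (f : ℝ[X]) :
    derivative^[n+2] ((X^2 - 1) * f)
      = (X^2 - 1) * derivative^[n+2] f + (2*((n:ℝ[X])+2)) * (X * derivative^[n+1] f)
        + (((n:ℝ[X])+2)*((n:ℝ[X])+1)) * derivative^[n] f := by
  induction n generalizing f with
  | zero =>
    show derivative (derivative _) = _
    have h1 : derivative ((X^2 - 1) * f) = ((2:ℕ):ℝ[X]) * (X * f) + (X^2-1) * derivative f := by
      simp [derivative_mul, map_ofNat]; push_cast; ring
    rw [h1, derivative_add, derivative_natCast_mul]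
    simp only [derivative_mul, derivative_X, derivative_sub, derivative_one,
      derivative_X_pow, map_ofNat, C_eq_natCast,
      Function.iterate_succ_apply', Function.iterate_zero_apply]
    push_cast
    ring
  | succ n ih =>
    rw [show n+1+2 = (n+2)+1 from rfl, Function.iterate_succ_apply]
    have h1 : derivative ((X^2 - 1) * f) = ((2:ℕ):ℝ[X]) * (X * f) + (X^2-1) * derivative f := by
      simp [derivative_mul, map_ofNat]; push_cast; ring
    have h2 : derivative^[n+2] (((2:ℕ):ℝ[X]) * (X * f)) = ((2:ℕ):ℝ[X]) * derivative^[n+2] (X * f) :=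
      iterate_derivative_natCast_mul
    rw [h1, iterate_derivative_add' (n+2), ih (derivative f), h2,
      iterate_derivative_X_mul (n+1) f]
    simp only [← Function.iterate_succ_apply (f := ⇑derivative), Nat.succ_eq_add_one]
    push_cast
    ring

/-- the Rodrigues polynomial -/
noncomputable def legPoly (ℓ : ℕ) : ℝ[X] := derivative^[ℓ] ((X^2 - 1)^ℓ)

lemma legPoly_ode (ℓ : ℕ) :
    (X^2 - 1) * derivative (derivative (legPoly ℓ)) + 2 * (X * derivative (legPoly ℓ))
      = ((ℓ:ℝ[X]) * ((ℓ:ℝ[X])+1)) * legPoly ℓ := by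
  cases ℓ with
  | zero => simp [legPoly]
  | succ m =>
    have hd : derivative (X^2 - 1 : ℝ[X]) = 2*X := by
      simp [derivative_sub, derivative_X_pow, map_ofNat]
      norm_num
    have hstep : (X^2 - 1) * derivative ((X^2 - 1)^(m+1))
        = ((2*(m+1) : ℕ) : ℝ[X]) * (X * (X^2 - 1)^(m+1)) := by
      rw [derivative_pow, hd, C_eq_natCast]
      simp only [Nat.add_sub_cancel]
      rw [show ((X:ℝ[X])^2-1)^(m+1) = (X^2-1)^m * (X^2-1) from pow_succ _ _]
      push_cast
      ring
    have h2 := congrArg ((⇑derivative : ℝ[X] → ℝ[X])^[m+2]) hstep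
    rw [iterate_derivative_sq_sub_one_mul m (derivative ((X^2 - 1)^(m+1))),
      iterate_derivative_natCast_mul, iterate_derivative_X_mul (m+1)] at h2
    simp only [← Function.iterate_succ_apply (f := ⇑derivative), Nat.succ_eq_add_one] at h2
    have hQ : legPoly (m+1) = derivative^[m+1] ((X^2 - 1)^(m+1)) := rfl
    have hQ1 : derivative (legPoly (m+1)) = derivative^[m+2] ((X^2 - 1)^(m+1)) := by
      rw [hQ, ← Function.iterate_succ_apply' (f := ⇑derivative)]
    have hQ2 : derivative (derivative (legPoly (m+1))) = derivative^[m+3] ((X^2 - 1)^(m+1)) := by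
      rw [hQ1, ← Function.iterate_succ_apply' (f := ⇑derivative)]
    rw [hQ2, hQ1, hQ]
    push_cast at h2 ⊢
    linear_combination h2

lemma eval_iterate_derivative_pow_mul (a : ℝ) (n : ℕ) :
    ∀ g : ℝ[X], (derivative^[n] ((X - C a)^n * g)).eval a = ((Nat.factorial n : ℕ) : ℝ) * g.eval a := by
  induction n with
  | zero => intro g; simp
  | succ n ih =>
    intro g
    have h1 : derivative ((X - C a)^(n+1) * g)
        = (X - C a)^n * ((((n:ℕ)+1 : ℕ) : ℝ[X]) * g + (X - C a) * derivative g) := by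
      rw [derivative_mul, derivative_pow, derivative_sub, derivative_X, derivative_C]
      simp only [Nat.add_sub_cancel, C_eq_natCast]
      push_cast
      ring
    rw [Function.iterate_succ_apply, h1, ih]
    simp [eval_add, eval_mul, eval_natCast]
    rw [Nat.factorial_succ]
    push_cast
    ring

lemma legPoly_eval_one (ℓ : ℕ) : (legPoly ℓ).eval 1 = 2^ℓ * ((Nat.factorial ℓ : ℕ) : ℝ) := by
  have hfac : ((X:ℝ[X])^2 - 1)^ℓ = (X - C 1)^ℓ * (X + C 1)^ℓ := by
    rw [← mul_pow]; congr 1; simp; ring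
  rw [legPoly, hfac, eval_iterate_derivative_pow_mul]
  simp
  ring

lemma legPoly_eval_neg_one (ℓ : ℕ) : (legPoly ℓ).eval (-1) = (-2)^ℓ * ((Nat.factorial ℓ : ℕ) : ℝ) := by
  have hfac : ((X:ℝ[X])^2 - 1)^ℓ = (X - C (-1))^ℓ * (X - C 1)^ℓ := by
    rw [← mul_pow]; congr 1; simp; ring
  rw [legPoly, hfac, eval_iterate_derivative_pow_mul]
  simp
  ring


lemma legendreP_eq (ℓ : ℕ) (u : ℝ) :
    legendreP ℓ u = (1 / ((2:ℝ)^ℓ * (Nat.factorial ℓ : ℝ))) * (legPoly ℓ).eval u := by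
  unfold legendreP
  have h : (fun x : ℝ => (x ^ 2 - 1) ^ ℓ) = fun x : ℝ => ((((X:ℝ[X])^2 - 1))^ℓ).eval x := by
    funext x; simp
  rw [h, iteratedDeriv_polyval]
  rfl

theorem abs_legendreP_le_one (ℓ : ℕ) {x : ℝ} (hx : x ∈ Set.Icc (-1:ℝ) 1) :
    |legendreP ℓ x| ≤ 1 := by
  obtain ⟨hx1, hx2⟩ := hx
  rcases Nat.eq_zero_or_pos ℓ with h0 | hpos
  · subst h0
    simp [legendreP_eq, legPoly]
  -- notation
  set c : ℝ := 1 / ((2:ℝ)^ℓ * (Nat.factorial ℓ : ℝ)) with hc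
  have hcpos : 0 < c := by
    rw [hc]; positivity
  have hN : (0:ℝ) < (ℓ:ℝ) * ((ℓ:ℝ)+1) := by positivity
  set s : ℝ := 1 / ((ℓ:ℝ) * ((ℓ:ℝ)+1)) with hs
  have hspos : 0 < s := by rw [hs]; positivity
  have hsN : s * ((ℓ:ℝ) * ((ℓ:ℝ)+1)) = 1 := by
    rw [hs]; field_simp
  set Q : ℝ[X] := legPoly ℓ with hQdef
  -- the evaluated ODE
  have hODE : ∀ y : ℝ, (y^2 - 1) * (derivative (derivative Q)).eval y
      + 2 * (y * (derivative Q).eval y) = ((ℓ:ℝ) * ((ℓ:ℝ)+1)) * Q.eval y := by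
    intro y
    have := congrArg (fun g : ℝ[X] => g.eval y) (legPoly_ode ℓ)
    simpa [eval_mul, eval_add, eval_pow] using this
  -- the Lyapunov function
  set f : ℝ → ℝ := fun y => (c * Q.eval y)^2 + s * (1 - y^2) * (c * (derivative Q).eval y)^2
    with hf
  have hderiv : ∀ y : ℝ, HasDerivAt f (2*s*c^2 * y * ((derivative Q).eval y)^2) y := by
    intro y
    have h1 : HasDerivAt (fun y : ℝ => (c * Q.eval y)^2)
        (2 * (c * Q.eval y) * (c * (derivative Q).eval y)) y := by
      have := ((Q.hasDerivAt y).const_mul c).fun_pow 2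
      simpa [mul_comm, mul_assoc, mul_left_comm] using this
    have h2 : HasDerivAt (fun y : ℝ => s * (1 - y^2) * (c * (derivative Q).eval y)^2)
        (s * (-(2*y)) * (c * (derivative Q).eval y)^2
          + s * (1 - y^2) * (2 * (c * (derivative Q).eval y)
              * (c * (derivative (derivative Q)).eval y))) y := by
      have ha : HasDerivAt (fun y : ℝ => s * (1 - y^2)) (s * (-(2*y))) y := by
        have : HasDerivAt (fun y : ℝ => 1 - y^2) (-(2*y)) y := by
          simpa using ((hasDerivAt_pow 2 y).const_sub 1)
        exact this.const_mul s
      have hb : HasDerivAt (fun y : ℝ => (c * (derivative Q).eval y)^2)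
          (2 * (c * (derivative Q).eval y) * (c * (derivative (derivative Q)).eval y)) y := by
        have := (((derivative Q).hasDerivAt y).const_mul c).fun_pow 2
        simpa [mul_comm, mul_assoc, mul_left_comm] using this
      simpa using ha.fun_mul hb
    have := h1.add h2
    refine this.congr_deriv (Eq.symm ?_)
    have hODEy := hODE y
    linear_combination (2*s*c^2*((derivative Q).eval y)) * hODEy
      + (2*c^2*((derivative Q).eval y)*(Q.eval y)) * hsN
  have hdiff : Differentiable ℝ f := fun y => (hderiv y).differentiableAt
  have hderiv_eq : ∀ y : ℝ, deriv f y = 2*s*c^2 * y * ((derivative Q).eval y)^2 :=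
    fun y => (hderiv y).deriv
  have hmono : MonotoneOn f (Set.Icc 0 1) := by
    apply monotoneOn_of_deriv_nonneg (convex_Icc 0 1) hdiff.continuous.continuousOn
      hdiff.differentiableOn
    intro y hy
    rw [interior_Icc] at hy
    rw [hderiv_eq y]
    have : (0:ℝ) ≤ y := le_of_lt hy.1
    positivity
  have hanti : AntitoneOn f (Set.Icc (-1) 0) := by
    apply antitoneOn_of_deriv_nonpos (convex_Icc (-1) 0) hdiff.continuous.continuousOn
      hdiff.differentiableOn
    intro y hy
    rw [interior_Icc] at hy
    rw [hderiv_eq y]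
    have hy0 : y ≤ 0 := le_of_lt hy.2
    have h1 : 0 ≤ 2 * s * c^2 * ((derivative Q).eval y)^2 := by positivity
    nlinarith [mul_nonpos_of_nonneg_of_nonpos h1 hy0]
  have hc1 : c * Q.eval 1 = 1 := by
    rw [hQdef, legPoly_eval_one, hc]
    field_simp
  have hcm1 : c * Q.eval (-1) = (-1)^ℓ := by
    rw [hQdef, legPoly_eval_neg_one, hc]
    rw [show ((-2:ℝ))^ℓ = (-1)^ℓ * 2^ℓ by rw [← neg_one_mul, mul_pow]]
    field_simp
  have hf1 : f 1 = 1 := by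
    have h : f 1 = (c * Q.eval 1)^2 + s * (1 - (1:ℝ)^2) * (c * (derivative Q).eval 1)^2 := rfl
    rw [h, hc1]
    norm_num
  have hfm1 : f (-1) = 1 := by
    have h : f (-1) = (c * Q.eval (-1))^2 + s * (1 - (-1:ℝ)^2) * (c * (derivative Q).eval (-1))^2 := rfl
    rw [h, hcm1]
    have h2 : ((-1:ℝ)^ℓ)^2 = 1 := by
      rcases Nat.even_or_odd ℓ with hpar|hpar
      · rw [hpar.neg_one_pow]; norm_num
      · rw [hpar.neg_one_pow]; norm_num
    rw [h2]
    norm_num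
  have hfx : f x ≤ 1 := by
    rcases le_total 0 x with hx0 | hx0
    · have := hmono (Set.mem_Icc.mpr ⟨hx0, hx2⟩) (Set.mem_Icc.mpr ⟨zero_le_one, le_refl 1⟩) hx2
      rw [hf1] at this; exact this
    · have := hanti (Set.mem_Icc.mpr ⟨le_refl (-1:ℝ), by norm_num⟩) (Set.mem_Icc.mpr ⟨hx1, hx0⟩) hx1
      rw [hfm1] at this; exact this
  have hsq : (legendreP ℓ x)^2 ≤ 1 := by
    have heq : legendreP ℓ x = c * Q.eval x := by
      rw [legendreP_eq, hc, hQdef]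
    rw [heq]
    have hpos2 : 0 ≤ s * (1 - x^2) * (c * (derivative Q).eval x)^2 := by
      have h1x : 0 ≤ 1 - x^2 := by nlinarith
      positivity
    have : f x = (c * Q.eval x)^2 + s * (1 - x^2) * (c * (derivative Q).eval x)^2 := rfl
    nlinarith [hfx]
  calc |legendreP ℓ x| = Real.sqrt ((legendreP ℓ x)^2) := (Real.sqrt_sq_eq_abs _).symm
    _ ≤ Real.sqrt 1 := Real.sqrt_le_sqrt hsq
    _ = 1 := Real.sqrt_one

end Legendre

section norms
variable {n : ℕ}

lemma l2_eq_norm (v : Fin n → ℝ) : l2 v = ‖(WithLp.equiv 2 (Fin n → ℝ)).symm v‖ := by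
  rw [EuclideanSpace.norm_eq]
  unfold l2
  congr 1
  refine Finset.sum_congr rfl fun i _ => ?_
  rw [Real.norm_eq_abs, sq_abs]
  rfl

lemma l2_nonneg (v : Fin n → ℝ) : 0 ≤ l2 v := Real.sqrt_nonneg _

lemma l2_add_le (v w : Fin n → ℝ) : l2 (v + w) ≤ l2 v + l2 w := by
  rw [l2_eq_norm, l2_eq_norm, l2_eq_norm]
  exact norm_add_le _ _

lemma l2_smul (c : ℝ) (v : Fin n → ℝ) : l2 (c • v) = |c| * l2 v := by
  rw [l2_eq_norm, l2_eq_norm]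
  have : (WithLp.equiv 2 (Fin n → ℝ)).symm (c • v)
      = c • (WithLp.equiv 2 (Fin n → ℝ)).symm v := rfl
  rw [this, norm_smul, Real.norm_eq_abs]

lemma l2_neg (v : Fin n → ℝ) : l2 (-v) = l2 v := by
  unfold l2; congr 1; refine Finset.sum_congr rfl fun i _ => ?_; simp

lemma l2_sub_comm (v w : Fin n → ℝ) : l2 (v - w) = l2 (w - v) := by
  rw [← l2_neg (v - w)]; congr 1; abel

lemma l2_sum_le {ι : Type*} (s : Finset ι) (g : ι → Fin n → ℝ) :
    l2 (∑ i ∈ s, g i) ≤ ∑ i ∈ s, l2 (g i) := by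
  classical
  induction s using Finset.induction with
  | empty => simp [l2]
  | insert _ _ hni ih =>
    rw [Finset.sum_insert hni, Finset.sum_insert hni]
    exact le_trans (l2_add_le _ _) (by linarith)

lemma l1_nonneg (v : Fin n → ℝ) : 0 ≤ l1 v := Finset.sum_nonneg fun i _ => abs_nonneg _

lemma abs_le_linf (v : Fin n → ℝ) (i : Fin n) : |v i| ≤ linf v :=
  le_ciSup (f := fun j => |v j|) (Set.Finite.bddAbove (Set.finite_range _)) i

lemma abs_dot_le (v w : Fin n → ℝ) : |v ⬝ᵥ w| ≤ linf v * l1 w := by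
  calc |v ⬝ᵥ w| ≤ ∑ i, |v i * w i| := Finset.abs_sum_le_sum_abs _ _
    _ ≤ ∑ i, linf v * |w i| := by
        refine Finset.sum_le_sum fun i _ => ?_
        rw [abs_mul]
        exact mul_le_mul_of_nonneg_right (abs_le_linf v i) (abs_nonneg _)
    _ = linf v * l1 w := by rw [l1, Finset.mul_sum]

end norms

/-- Core LASSO estimation bound for a single multipole. -/
lemma lasso_l2_bound {p m : ℕ} (hm : 1 ≤ m)
    (X : Matrix (Fin m) (Fin p) ℝ) (φ φhat : Fin p → ℝ) (E : Fin m → ℝ)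
    (lam : ℝ) (hlam : 0 < lam) (q : ℕ)
    (hsparse : (Finset.univ.filter fun i => φ i ≠ 0).card ≤ q)
    (hmin : ∀ β : Fin p → ℝ,
      (m : ℝ)⁻¹ * (∑ i, ((X *ᵥ φ + E) i - (X *ᵥ φhat) i) ^ 2) + lam * l1 φhat
        ≤ (m : ℝ)⁻¹ * (∑ i, ((X *ᵥ φ + E) i - (X *ᵥ β) i) ^ 2) + lam * l1 β)
    (hdev : linf ((m : ℝ)⁻¹ • (Xᵀ *ᵥ E)) ≤ lam / 4)
    (α τ : ℝ) (hα : 0 < α) (hτ : 0 < τ)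
    (hRE : RECond ((m : ℝ)⁻¹ • (Xᵀ * X)) α τ)
    (hqτ : (q : ℝ) * τ ≤ α / 32) :
    l2 (φhat - φ) ≤ 12 * lam * Real.sqrt q / α := by
  classical
  set Δ : Fin p → ℝ := φhat - φ with hΔ
  set minv : ℝ := (m : ℝ)⁻¹ with hminv
  have hminv_pos : 0 < minv := by
    rw [hminv]; positivity
  -- expand the basic inequality
  have hexp : ∀ i, ((X *ᵥ φ + E) i - (X *ᵥ φhat) i) = E i - (X *ᵥ Δ) i := by
    intro i
    rw [hΔ, Matrix.mulVec_sub]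
    simp [Pi.add_apply, Pi.sub_apply]
    ring
  have hE0 : ∀ i, ((X *ᵥ φ + E) i - (X *ᵥ φ) i) = E i := by
    intro i; simp
  set A : ℝ := ∑ i, (E i)^2 with hA
  set B : ℝ := ∑ i, E i * (X *ᵥ Δ) i with hB
  set Cq : ℝ := ∑ i, ((X *ᵥ Δ) i)^2 with hCq
  have hCq_nonneg : 0 ≤ Cq := Finset.sum_nonneg fun i _ => sq_nonneg _
  have hsum1 : (∑ i, ((X *ᵥ φ + E) i - (X *ᵥ φhat) i) ^ 2) = A - 2*B + Cq := by
    rw [hA, hB, hCq, Finset.mul_sum, ← Finset.sum_sub_distrib, ← Finset.sum_add_distrib]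
    refine Finset.sum_congr rfl fun i _ => ?_
    rw [hexp i]
    ring
  have hsum2 : (∑ i, ((X *ᵥ φ + E) i - (X *ᵥ φ) i) ^ 2) = A := by
    rw [hA]; refine Finset.sum_congr rfl fun i _ => ?_; rw [hE0 i]
  have key1 : minv * Cq + lam * l1 φhat ≤ 2 * (minv * B) + lam * l1 φ := by
    have h := hmin φ
    rw [hsum1, hsum2] at h
    nlinarith [h]
  -- the deviation bound
  have hdot : minv * B = (minv • (Xᵀ *ᵥ E)) ⬝ᵥ Δ := by
    have h1 : B = E ⬝ᵥ (X *ᵥ Δ) := rfl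
    rw [h1, Matrix.dotProduct_mulVec, ← Matrix.mulVec_transpose]
    rw [smul_dotProduct]
    rfl
  have hdev2 : |minv * B| ≤ (lam/4) * l1 Δ := by
    rw [hdot]
    calc |(minv • (Xᵀ *ᵥ E)) ⬝ᵥ Δ| ≤ linf (minv • (Xᵀ *ᵥ E)) * l1 Δ := abs_dot_le _ _
      _ ≤ (lam/4) * l1 Δ := by
          apply mul_le_mul_of_nonneg_right _ (l1_nonneg Δ)
          exact hdev
  have hl1_nonneg := l1_nonneg Δ
  have key2 : minv * Cq + lam * l1 φhat ≤ (lam/2) * l1 Δ + lam * l1 φ := by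
    have habs := abs_le.mp hdev2
    nlinarith [key1, habs.2]
  -- RE lower bound
  have hRE2 : α * (l2 Δ)^2 - τ * (l1 Δ)^2 ≤ minv * Cq := by
    have h := hRE Δ
    have heq : Δ ⬝ᵥ ((minv • (Xᵀ * X)) *ᵥ Δ) = minv * Cq := by
      rw [Matrix.smul_mulVec, dotProduct_smul, ← Matrix.mulVec_mulVec]
      rw [Matrix.dotProduct_mulVec, ← Matrix.mulVec_transpose, Matrix.transpose_transpose]
      have : (X *ᵥ Δ) ⬝ᵥ (X *ᵥ Δ) = Cq := by
        rw [hCq]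
        refine Finset.sum_congr rfl fun i _ => ?_
        ring
      rw [smul_eq_mul, this]
    rw [heq] at h
    exact h
  -- l1 triangle
  have hl1_diff : l1 φ - l1 φhat ≤ l1 Δ := by
    rw [l1, l1, l1, ← Finset.sum_sub_distrib]
    refine Finset.sum_le_sum fun i _ => ?_
    have : Δ i = φhat i - φ i := rfl
    rw [this]
    have := abs_sub_abs_le_abs_sub (φ i) (φhat i)
    rw [abs_sub_comm] at this
    exact this
  -- support decomposition / cone condition
  set S : Finset (Fin p) := Finset.univ.filter (fun i => φ i ≠ 0) with hS
  set a : ℝ := ∑ i ∈ S, |Δ i| with ha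
  set b : ℝ := ∑ i ∈ Finset.univ.filter (fun i => ¬ φ i ≠ 0), |Δ i| with hb
  have hab : l1 Δ = a + b := by
    rw [l1, ha, hb, hS]
    exact (Finset.sum_filter_add_sum_filter_not _ _ _).symm
  have ha_nonneg : 0 ≤ a := Finset.sum_nonneg fun i _ => abs_nonneg _
  have hb_nonneg : 0 ≤ b := Finset.sum_nonneg fun i _ => abs_nonneg _
  have hl1φ : l1 φ = ∑ i ∈ S, |φ i| := by
    rw [l1, hS]
    rw [← Finset.sum_filter_add_sum_filter_not Finset.univ (fun i => φ i ≠ 0) (fun i => |φ i|)]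
    have : ∑ i ∈ Finset.univ.filter (fun i => ¬ φ i ≠ 0), |φ i| = 0 := by
      apply Finset.sum_eq_zero
      intro i hi
      simp only [Finset.mem_filter, not_not] at hi
      rw [hi.2, abs_zero]
    rw [this, add_zero]
  have hl1φhat : ∑ i ∈ S, |φ i| - a + b ≤ l1 φhat := by
    rw [l1]
    rw [← Finset.sum_filter_add_sum_filter_not Finset.univ (fun i => φ i ≠ 0) (fun i => |φhat i|)]
    have h1 : ∑ i ∈ Finset.univ.filter (fun i => ¬ φ i ≠ 0), |φhat i| = b := by
      rw [hb]
      refine Finset.sum_congr rfl fun i hi => ?_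
      simp only [Finset.mem_filter, not_not] at hi
      have : Δ i = φhat i - φ i := rfl
      rw [this, hi.2, sub_zero]
    have h2 : ∑ i ∈ S, |φ i| - a ≤ ∑ i ∈ S, |φhat i| := by
      rw [ha, ← Finset.sum_sub_distrib]
      refine Finset.sum_le_sum fun i _ => ?_
      have hd : Δ i = φhat i - φ i := rfl
      have := abs_sub_abs_le_abs_sub (φ i) (φhat i)
      rw [abs_sub_comm, ← hd] at this
      linarith [this]
    rw [← hS, h1]
    linarith
  have hcone : b ≤ 3 * a := by
    have h0 : lam * l1 φhat ≤ (lam/2) * l1 Δ + lam * l1 φ := by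
      nlinarith [key2, mul_nonneg (le_of_lt hminv_pos) hCq_nonneg]
    have h1 : l1 φhat ≤ (1/2) * l1 Δ + l1 φ := by
      have := (mul_le_mul_iff_right₀ hlam).mp (by linarith [h0] : lam * l1 φhat ≤ lam * ((1/2) * l1 Δ + l1 φ))
      linarith [this]
    rw [hab, hl1φ] at h1
    linarith [hl1φhat, h1]
  have hl1_le : l1 Δ ≤ 4 * a := by rw [hab]; linarith
  -- Cauchy-Schwarz on the support
  have hcs : a ≤ Real.sqrt q * l2 Δ := by
    have h1 : a^2 ≤ (S.card : ℝ) * ∑ i ∈ S, (Δ i)^2 := by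
      have := sq_sum_le_card_mul_sum_sq (s := S) (f := fun i => |Δ i|)
      simpa [sq_abs] using this
    have h2 : ∑ i ∈ S, (Δ i)^2 ≤ ∑ i, (Δ i)^2 :=
      Finset.sum_le_sum_of_subset_of_nonneg (Finset.subset_univ S)
        (fun i _ _ => sq_nonneg _)
    have h3 : (S.card : ℝ) ≤ (q : ℝ) := by
      exact_mod_cast hsparse
    have h4 : a^2 ≤ (q : ℝ) * (l2 Δ)^2 := by
      have hl2sq : (l2 Δ)^2 = ∑ i, (Δ i)^2 := by
        rw [l2, Real.sq_sqrt (Finset.sum_nonneg fun i _ => sq_nonneg _)]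
      rw [hl2sq]
      calc a^2 ≤ (S.card : ℝ) * ∑ i ∈ S, (Δ i)^2 := h1
        _ ≤ (q : ℝ) * ∑ i, (Δ i)^2 := by
            apply mul_le_mul h3 h2 (Finset.sum_nonneg fun i _ => sq_nonneg _) (Nat.cast_nonneg q)
    calc a = Real.sqrt (a^2) := (Real.sqrt_sq ha_nonneg).symm
      _ ≤ Real.sqrt ((q:ℝ) * (l2 Δ)^2) := Real.sqrt_le_sqrt h4
      _ = Real.sqrt q * l2 Δ := by
          rw [Real.sqrt_mul (Nat.cast_nonneg q), Real.sqrt_sq (l2_nonneg Δ)]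
  -- combine
  set t : ℝ := l2 Δ with ht
  have ht_nonneg : 0 ≤ t := l2_nonneg Δ
  have hsq_nonneg : (0:ℝ) ≤ Real.sqrt q := Real.sqrt_nonneg _
  have hl1t : l1 Δ ≤ 4 * Real.sqrt q * t := by
    calc l1 Δ ≤ 4 * a := hl1_le
      _ ≤ 4 * (Real.sqrt q * t) := by linarith [hcs]
      _ = 4 * Real.sqrt q * t := by ring
  have hkey3 : α * t^2 ≤ τ * (l1 Δ)^2 + (3 * lam / 2) * l1 Δ := by
    have hprod : lam * (l1 φ - l1 φhat) ≤ lam * l1 Δ :=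
      mul_le_mul_of_nonneg_left hl1_diff (le_of_lt hlam)
    have hre := hRE2
    clear hcs hl1t hRE2 hl1_le hcone hl1φhat hl1φ hab hdot hdev2 key1 hsum1 hsum2 hexp hE0 hmin hdev hRE
    linarith only [hre, key2, hprod]
  have hq_sq : (Real.sqrt q)^2 = (q:ℝ) := Real.sq_sqrt (Nat.cast_nonneg q)
  have hfinal : (α/2) * t^2 ≤ 6 * lam * Real.sqrt q * t := by
    have h1 : (l1 Δ)^2 ≤ 16 * (q:ℝ) * t^2 := by
      have := mul_self_le_mul_self hl1_nonneg hl1t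
      calc (l1 Δ)^2 = l1 Δ * l1 Δ := by ring
        _ ≤ (4 * Real.sqrt q * t) * (4 * Real.sqrt q * t) := this
        _ = 16 * ((Real.sqrt q)^2) * t^2 := by ring
        _ = 16 * (q:ℝ) * t^2 := by rw [hq_sq]
    have h2 : τ * (l1 Δ)^2 ≤ 16 * ((q:ℝ) * τ) * t^2 := by
      calc τ * (l1 Δ)^2 ≤ τ * (16 * (q:ℝ) * t^2) :=
            mul_le_mul_of_nonneg_left h1 (le_of_lt hτ)
        _ = 16 * ((q:ℝ) * τ) * t^2 := by ring
    have h3 : 16 * ((q:ℝ) * τ) * t^2 ≤ (α/2) * t^2 := by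
      nlinarith [hqτ, sq_nonneg t]
    have h4 : (3 * lam / 2) * l1 Δ ≤ 6 * lam * Real.sqrt q * t := by
      calc (3 * lam / 2) * l1 Δ ≤ (3 * lam / 2) * (4 * Real.sqrt q * t) :=
            mul_le_mul_of_nonneg_left hl1t (by linarith)
        _ = 6 * lam * Real.sqrt q * t := by ring
    nlinarith [hkey3, h2, h3, h4]
  rcases eq_or_lt_of_le ht_nonneg with h0 | h0
  · rw [← h0]
    positivity
  · rw [le_div_iff₀ hα]
    nlinarith [hfinal, h0]


section Assembly

lemma l2_eq_norm' {n : ℕ} (v : Fin n → ℝ) :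
    l2 v = ‖(PiLp.continuousLinearEquiv 2 ℝ (fun _ : Fin n => ℝ)).symm v‖ :=
  l2_eq_norm v

lemma coef_nonneg (ℓ : ℕ) : 0 ≤ (2 * (ℓ:ℝ) + 1) / (4 * π) := by
  have := Real.pi_pos
  positivity

lemma l2_legendreTerm_le {p : ℕ} (c : ℕ → Fin p → ℝ) (ℓ : ℕ) {z : ℝ}
    (hz : z ∈ Set.Icc (-1:ℝ) 1) :
    l2 (legendreTerm c ℓ z) ≤ (2 * (ℓ:ℝ) + 1) / (4 * π) * l2 (c ℓ) := by
  rw [legendreTerm, l2_smul]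
  have h1 : |(2 * (ℓ:ℝ) + 1) / (4 * π) * legendreP ℓ z| ≤ (2 * (ℓ:ℝ) + 1) / (4 * π) := by
    rw [abs_mul, abs_of_nonneg (coef_nonneg ℓ)]
    calc (2 * (ℓ:ℝ) + 1) / (4 * π) * |legendreP ℓ z|
        ≤ (2 * (ℓ:ℝ) + 1) / (4 * π) * 1 :=
          mul_le_mul_of_nonneg_left (abs_legendreP_le_one ℓ hz) (coef_nonneg ℓ)
      _ = (2 * (ℓ:ℝ) + 1) / (4 * π) := mul_one _
  exact mul_le_mul_of_nonneg_right h1 (l2_nonneg _)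

end Assembly


/-- **Oracle inequality in the sup norm for the LASSO estimator of spherical
autoregressive kernels.**  For each multipole `ℓ < L`, `φ̂_ℓ` is any minimizer of the
`ℓ¹`-penalized least squares objective; under the deviation condition and the
restricted eigenvalue condition for each sample Gram matrix `Γ̂_ℓ = X_ℓᵀX_ℓ/M_ℓ`,
`‖k̂ − k‖_{L∞} ≤ (3/π) λ ∑_{ℓ<L} (√q_ℓ/α_ℓ)(2ℓ+1) + ‖k − k_L‖_{L∞}`. -/
theorem oracle_inequality_sup (p L : ℕ) (hp : 1 ≤ p) (hL : 1 ≤ L)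
    (lam : ℝ) (hlam : 0 < lam)
    (M : ℕ → ℕ) (hM : ∀ ℓ < L, 1 ≤ M ℓ)
    (X : (ℓ : ℕ) → Matrix (Fin (M ℓ)) (Fin p) ℝ)
    (φ : ℕ → Fin p → ℝ) (q : ℕ → ℕ)
    (hsparse : ∀ ℓ < L, (Finset.univ.filter fun i => φ ℓ i ≠ 0).card ≤ q ℓ)
    (E : (ℓ : ℕ) → Fin (M ℓ) → ℝ)
    (Y : (ℓ : ℕ) → Fin (M ℓ) → ℝ)
    (hY : ∀ ℓ < L, Y ℓ = X ℓ *ᵥ φ ℓ + E ℓ)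
    (φhat : ℕ → Fin p → ℝ)
    (hmin : ∀ ℓ < L, ∀ β : Fin p → ℝ,
      (M ℓ : ℝ)⁻¹ * (∑ i, (Y ℓ i - (X ℓ *ᵥ φhat ℓ) i) ^ 2) + lam * l1 (φhat ℓ)
        ≤ (M ℓ : ℝ)⁻¹ * (∑ i, (Y ℓ i - (X ℓ *ᵥ β) i) ^ 2) + lam * l1 β)
    (hdev : ∀ ℓ < L, linf ((M ℓ : ℝ)⁻¹ • ((X ℓ)ᵀ *ᵥ E ℓ)) ≤ lam / 4)
    (α τ : ℕ → ℝ) (hα : ∀ ℓ < L, 0 < α ℓ) (hτ : ∀ ℓ < L, 0 < τ ℓ)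
    (hRE : ∀ ℓ < L, RECond ((M ℓ : ℝ)⁻¹ • ((X ℓ)ᵀ * X ℓ)) (α ℓ) (τ ℓ))
    (hqτ : ∀ ℓ < L, (q ℓ : ℝ) * τ ℓ ≤ α ℓ / 32)
    (hsum : Summable fun ℓ : ℕ => l2 (φ ℓ) * (2 * (ℓ : ℝ) + 1))
    (k : ℝ → Fin p → ℝ)
    (habs : ∀ z ∈ Set.Icc (-1 : ℝ) 1, Summable fun ℓ : ℕ => l2 (legendreTerm φ ℓ z))
    (hunif : Tendsto (fun n : ℕ =>
        ⨆ z : Set.Icc (-1 : ℝ) 1, l2 (k (z : ℝ) - legendreSum φ n (z : ℝ)))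
      atTop (nhds 0))
    (hptw : ∀ z ∈ Set.Icc (-1 : ℝ) 1, k z = ∑' ℓ : ℕ, legendreTerm φ ℓ z) :
    (⨆ z : Set.Icc (-1 : ℝ) 1, l2 (legendreSum φhat L (z : ℝ) - k (z : ℝ)))
      ≤ (3 / π) * lam
          * (∑ ℓ ∈ Finset.range L, (Real.sqrt (q ℓ) / α ℓ) * (2 * (ℓ : ℝ) + 1))
        + ⨆ z : Set.Icc (-1 : ℝ) 1, l2 (k (z : ℝ) - legendreSum φ L (z : ℝ)) := by
  classical
  have hπ := Real.pi_pos
  -- Step A: per-multipole LASSO bound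
  have hA : ∀ ℓ < L, l2 (φhat ℓ - φ ℓ) ≤ 12 * lam * Real.sqrt (q ℓ) / α ℓ := by
    intro ℓ hℓ
    have hminℓ := hmin ℓ hℓ
    rw [hY ℓ hℓ] at hminℓ
    exact lasso_l2_bound (hM ℓ hℓ) (X ℓ) (φ ℓ) (φhat ℓ) (E ℓ) lam hlam (q ℓ)
      (hsparse ℓ hℓ) hminℓ (hdev ℓ hℓ) (α ℓ) (τ ℓ) (hα ℓ hℓ) (hτ ℓ hℓ)
      (hRE ℓ hℓ) (hqτ ℓ hℓ)
  -- Step B: uniform bound on the estimated partial sum error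
  set CA : ℝ := (3 / π) * lam * (∑ ℓ ∈ Finset.range L, (Real.sqrt (q ℓ) / α ℓ) * (2 * (ℓ : ℝ) + 1))
    with hCA
  have hB : ∀ z ∈ Set.Icc (-1:ℝ) 1,
      l2 (legendreSum φhat L z - legendreSum φ L z) ≤ CA := by
    intro z hz
    have hdecomp : legendreSum φhat L z - legendreSum φ L z
        = ∑ ℓ ∈ Finset.range L, ((2 * (ℓ:ℝ) + 1) / (4 * π) * legendreP ℓ z) • (φhat ℓ - φ ℓ) := by
      rw [legendreSum, legendreSum, ← Finset.sum_sub_distrib]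
      refine Finset.sum_congr rfl fun ℓ _ => ?_
      rw [legendreTerm, legendreTerm, ← smul_sub]
    rw [hdecomp]
    calc l2 (∑ ℓ ∈ Finset.range L, ((2 * (ℓ:ℝ) + 1) / (4 * π) * legendreP ℓ z) • (φhat ℓ - φ ℓ))
        ≤ ∑ ℓ ∈ Finset.range L, l2 (((2 * (ℓ:ℝ) + 1) / (4 * π) * legendreP ℓ z) • (φhat ℓ - φ ℓ)) :=
          l2_sum_le _ _
      _ ≤ ∑ ℓ ∈ Finset.range L, (3 / π) * lam * ((Real.sqrt (q ℓ) / α ℓ) * (2 * (ℓ : ℝ) + 1)) := by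
          refine Finset.sum_le_sum fun ℓ hℓ => ?_
          rw [Finset.mem_range] at hℓ
          rw [l2_smul]
          have h1 : |(2 * (ℓ:ℝ) + 1) / (4 * π) * legendreP ℓ z| ≤ (2 * (ℓ:ℝ) + 1) / (4 * π) := by
            rw [abs_mul, abs_of_nonneg (coef_nonneg ℓ)]
            calc (2 * (ℓ:ℝ) + 1) / (4 * π) * |legendreP ℓ z|
                ≤ (2 * (ℓ:ℝ) + 1) / (4 * π) * 1 :=
                  mul_le_mul_of_nonneg_left (abs_legendreP_le_one ℓ hz) (coef_nonneg ℓ)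
              _ = (2 * (ℓ:ℝ) + 1) / (4 * π) := mul_one _
          have h2 : l2 (φhat ℓ - φ ℓ) ≤ 12 * lam * Real.sqrt (q ℓ) / α ℓ := hA ℓ hℓ
          have h3 : |(2 * (ℓ:ℝ) + 1) / (4 * π) * legendreP ℓ z| * l2 (φhat ℓ - φ ℓ)
              ≤ ((2 * (ℓ:ℝ) + 1) / (4 * π)) * (12 * lam * Real.sqrt (q ℓ) / α ℓ) :=
            mul_le_mul h1 h2 (l2_nonneg _) (coef_nonneg ℓ)
          refine le_trans h3 (le_of_eq ?_)
          have hαℓ : (α ℓ) ≠ 0 := ne_of_gt (hα ℓ hℓ)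
          field_simp
          ring
      _ = CA := by rw [hCA, Finset.mul_sum]
  -- Step C: uniform bound on the truncation error family
  set C0 : ℝ := (∑' ℓ : ℕ, (2 * (ℓ:ℝ) + 1) / (4 * π) * l2 (φ ℓ))
      + ∑ ℓ ∈ Finset.range L, (2 * (ℓ:ℝ) + 1) / (4 * π) * l2 (φ ℓ) with hC0
  have hsum' : Summable fun ℓ : ℕ => (2 * (ℓ:ℝ) + 1) / (4 * π) * l2 (φ ℓ) := by
    have h := hsum.mul_left (1 / (4 * π))
    refine h.congr fun ℓ => ?_
    field_simp
  have hC : ∀ z ∈ Set.Icc (-1:ℝ) 1, l2 (k z - legendreSum φ L z) ≤ C0 := by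
    intro z hz
    have hkz : l2 (k z) ≤ ∑' ℓ : ℕ, (2 * (ℓ:ℝ) + 1) / (4 * π) * l2 (φ ℓ) := by
      set e := PiLp.continuousLinearEquiv 2 ℝ (fun _ : Fin p => ℝ) with he
      set g : ℕ → EuclideanSpace ℝ (Fin p) := fun ℓ => e.symm (legendreTerm φ ℓ z) with hg
      have hgnorm : ∀ ℓ, ‖g ℓ‖ = l2 (legendreTerm φ ℓ z) := fun ℓ => (l2_eq_norm' _).symm
      have hgsum : Summable g := by
        apply Summable.of_norm
        refine (habs z hz).congr fun ℓ => (hgnorm ℓ).symm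
      have htsum_eq : e.symm (k z) = ∑' ℓ : ℕ, g ℓ := by
        rw [hptw z hz]
        have h1 : e (∑' ℓ : ℕ, g ℓ) = (∑' ℓ : ℕ, legendreTerm φ ℓ z) := by
          rw [ContinuousLinearEquiv.map_tsum e]
          refine tsum_congr fun ℓ => ?_
          simp [hg]
        rw [← h1]
        simp
      have h2 : l2 (k z) = ‖∑' ℓ : ℕ, g ℓ‖ := by rw [l2_eq_norm', htsum_eq]
      rw [h2]
      calc ‖∑' ℓ : ℕ, g ℓ‖ ≤ ∑' ℓ : ℕ, ‖g ℓ‖ :=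
            norm_tsum_le_tsum_norm (by refine (habs z hz).congr fun ℓ => (hgnorm ℓ).symm)
        _ ≤ ∑' ℓ : ℕ, (2 * (ℓ:ℝ) + 1) / (4 * π) * l2 (φ ℓ) := by
            apply Summable.tsum_le_tsum _ _ hsum'
            · intro ℓ
              rw [hgnorm ℓ]
              exact l2_legendreTerm_le φ ℓ hz
            · refine (habs z hz).congr fun ℓ => (hgnorm ℓ).symm
    have hSz : l2 (legendreSum φ L z) ≤ ∑ ℓ ∈ Finset.range L, (2 * (ℓ:ℝ) + 1) / (4 * π) * l2 (φ ℓ) := by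
      rw [legendreSum]
      refine le_trans (l2_sum_le _ _) (Finset.sum_le_sum fun ℓ _ => l2_legendreTerm_le φ ℓ hz)
    have htri : l2 (k z - legendreSum φ L z) ≤ l2 (k z) + l2 (legendreSum φ L z) := by
      have : k z - legendreSum φ L z = k z + (-(legendreSum φ L z)) := by abel
      rw [this]
      refine le_trans (l2_add_le _ _) ?_
      rw [l2_neg]
    rw [hC0]
    linarith [hkz, hSz, htri]
  -- Step D: conclude
  have hne : Nonempty (Set.Icc (-1:ℝ) 1) := ⟨⟨0, by norm_num⟩⟩
  have hbdd : BddAbove (Set.range fun z : Set.Icc (-1:ℝ) 1 =>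
      l2 (k (z:ℝ) - legendreSum φ L (z:ℝ))) := by
    refine ⟨C0, ?_⟩
    rintro _ ⟨z, rfl⟩
    exact hC z z.2
  refine ciSup_le fun z => ?_
  have htri : l2 (legendreSum φhat L (z:ℝ) - k (z:ℝ))
      ≤ l2 (legendreSum φhat L (z:ℝ) - legendreSum φ L (z:ℝ))
        + l2 (k (z:ℝ) - legendreSum φ L (z:ℝ)) := by
    have hdec : legendreSum φhat L (z:ℝ) - k (z:ℝ)
        = (legendreSum φhat L (z:ℝ) - legendreSum φ L (z:ℝ))
          + (legendreSum φ L (z:ℝ) - k (z:ℝ)) := by abel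
    rw [hdec]
    refine le_trans (l2_add_le _ _) ?_
    rw [l2_sub_comm (legendreSum φ L (z:ℝ)) (k (z:ℝ))]
  have h1 : l2 (legendreSum φhat L (z:ℝ) - legendreSum φ L (z:ℝ)) ≤ CA := hB (z:ℝ) z.2
  have h2 : l2 (k (z:ℝ) - legendreSum φ L (z:ℝ))
      ≤ ⨆ z : Set.Icc (-1:ℝ) 1, l2 (k (z:ℝ) - legendreSum φ L (z:ℝ)) :=
    le_ciSup hbdd z
  calc l2 (legendreSum φhat L (z:ℝ) - k (z:ℝ))
      ≤ CA + l2 (k (z:ℝ) - legendreSum φ L (z:ℝ)) := by linarith [htri, h1]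
    _ ≤ CA + ⨆ z : Set.Icc (-1:ℝ) 1, l2 (k (z:ℝ) - legendreSum φ L (z:ℝ)) := by linarith [h2]
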